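/- arXiv:1702.07412 — 4 statements merged into one kernel-verified Lean document; each statement's English description precedes it below -/
import Mathlib

section
/- Let X be a Banach space, [β₀, β₁] ⊂ ℝ, and let x̄(β) = ((β₁ − β)/(β₁ − β₀)) x̄₀ + ((β − β₀)/(β₁ − β₀)) x̄₁ be the linear interpolation between two points x̄₀, x̄₁ ∈ X. Let T : [β₀, β₁] × X → X be Fréchet differentiable in its second argument. Suppose Y ≥ 0 and Z ≥ 0 are constants such that sup_{β ∈ [β₀,β₁]} ‖T(β, x̄(β)) − x̄(β)‖ ≤ Y and ‖D_x T(β, x̄(β) + b) c‖ ≤ Z for all β ∈ [β₀, β₁] and all b, c with ‖b‖ ≤ r, ‖c‖ ≤ r. If Y + Z < r, then the map T̃(β, x) = T(β, x + x̄(β)) − x̄(β) maps B̄_r(0) into B̄_r(0) for every β ∈ [β₀, β₁] and satisfies ‖T̃(β, x) − T̃(β, y)‖ ≤ (Z/r)‖x − y‖ for all x, y ∈ B̄_r(0), with Z/r < 1; that is, T̃ is a uniform contraction on B̄_r(0). -/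
/-- If the residue bound `Y` and the derivative bound `Z` satisfy `Y + Z < r`, then
the shifted map `T̃(β, x) = T(β, x + x̄(β)) − x̄(β)`, with `x̄(β)` the linear
interpolation between `xb0` and `xb1`, maps the closed ball `B̄_r(0)` into itself and
is a uniform contraction with contraction constant `Z/r < 1`. -/
theorem radii_bounds_give_uniform_contraction
    {X : Type*} [NormedAddCommGroup X] [NormedSpace ℝ X] [CompleteSpace X]
    (β₀ β₁ : ℝ) (hβ : β₀ < β₁) (xb0 xb1 : X)
    (xbar : ℝ → X)
    (hxbar : ∀ β, xbar β = ((β₁ - β) / (β₁ - β₀)) • xb0 + ((β - β₀) / (β₁ - β₀)) • xb1)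
    (T : ℝ → X → X) (DT : ℝ → X → (X →L[ℝ] X))
    (hdiff : ∀ β ∈ Set.Icc β₀ β₁, ∀ x : X, HasFDerivAt (T β) (DT β x) x)
    (r Y Z : ℝ) (hr : 0 < r) (hY : 0 ≤ Y) (hZ : 0 ≤ Z)
    (hYbound : ∀ β ∈ Set.Icc β₀ β₁, ‖T β (xbar β) - xbar β‖ ≤ Y)
    (hZbound : ∀ β ∈ Set.Icc β₀ β₁, ∀ b c : X, ‖b‖ ≤ r → ‖c‖ ≤ r →
      ‖DT β (xbar β + b) c‖ ≤ Z)
    (hYZ : Y + Z < r) :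
    (∀ β ∈ Set.Icc β₀ β₁, ∀ x ∈ Metric.closedBall (0 : X) r,
      T β (x + xbar β) - xbar β ∈ Metric.closedBall (0 : X) r) ∧
    (∀ β ∈ Set.Icc β₀ β₁, ∀ x ∈ Metric.closedBall (0 : X) r,
      ∀ y ∈ Metric.closedBall (0 : X) r,
      ‖(T β (x + xbar β) - xbar β) - (T β (y + xbar β) - xbar β)‖ ≤ (Z / r) * ‖x - y‖) ∧
    Z / r < 1 := by
  -- operator norm bound
  have hop : ∀ β ∈ Set.Icc β₀ β₁, ∀ u ∈ Metric.closedBall (xbar β) r,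
      ‖DT β u‖ ≤ Z / r := by
    intro β hβm u hu
    apply ContinuousLinearMap.opNorm_le_bound _ (div_nonneg hZ hr.le)
    intro c
    rcases eq_or_ne c 0 with rfl | hc
    · simp
    · have hcn : 0 < ‖c‖ := norm_pos_iff.mpr hc
      have hb : ‖u - xbar β‖ ≤ r := by
        simpa [dist_eq_norm] using hu
      have hkey : ‖DT β u ((r / ‖c‖) • c)‖ ≤ Z := by
        have := hZbound β hβm (u - xbar β) ((r / ‖c‖) • c) hb (by
          rw [norm_smul, Real.norm_eq_abs, abs_of_nonneg (by positivity)]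
          field_simp
          exact le_rfl)
        simpa using this
      rw [map_smul, norm_smul, Real.norm_eq_abs, abs_of_nonneg (by positivity),
        div_mul_eq_mul_div, div_le_iff₀ hcn] at hkey
      rw [div_mul_eq_mul_div, le_div_iff₀ hr]
      nlinarith [norm_nonneg (DT β u c)]
  -- Lipschitz bound
  have hlip : ∀ β ∈ Set.Icc β₀ β₁, ∀ x ∈ Metric.closedBall (0 : X) r,
      ∀ y ∈ Metric.closedBall (0 : X) r,
      ‖T β (x + xbar β) - T β (y + xbar β)‖ ≤ (Z / r) * ‖x - y‖ := by
    intro β hβm x hx y hy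
    have hconv : Convex ℝ (Metric.closedBall (xbar β) r) := convex_closedBall _ _
    have hmem : ∀ z ∈ Metric.closedBall (0 : X) r,
        z + xbar β ∈ Metric.closedBall (xbar β) r := by
      intro z hz
      simpa [dist_eq_norm] using (by simpa [dist_eq_norm] using hz : ‖z‖ ≤ r)
    have key := hconv.norm_image_sub_le_of_norm_hasFDerivWithin_le
      (f := T β) (f' := DT β) (C := Z / r)
      (fun u _ => (hdiff β hβm u).hasFDerivWithinAt)
      (fun u hu => hop β hβm u hu) (hmem y hy) (hmem x hx)
    have heq : (x + xbar β) - (y + xbar β) = x - y := by abel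
    rwa [heq] at key
  have hZr1 : Z / r < 1 := (div_lt_one hr).mpr (by linarith)
  refine ⟨?_, ?_, hZr1⟩
  · intro β hβm x hx
    have hx' : ‖x‖ ≤ r := by simpa [dist_eq_norm] using hx
    have h1 := hlip β hβm x hx 0 (by simpa using hr.le)
    simp only [zero_add, sub_zero] at h1
    have h2 := hYbound β hβm
    have htri : ‖T β (x + xbar β) - xbar β‖
        ≤ ‖T β (x + xbar β) - T β (xbar β)‖ + ‖T β (xbar β) - xbar β‖ :=
      norm_sub_le_norm_sub_add_norm_sub _ _ _
    have : ‖T β (x + xbar β) - xbar β‖ ≤ (Z / r) * ‖x‖ + Y := by linarith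
    have hZx : (Z / r) * ‖x‖ ≤ Z := by
      calc (Z / r) * ‖x‖ ≤ (Z / r) * r := by
            apply mul_le_mul_of_nonneg_left hx' (div_nonneg hZ hr.le)
        _ = Z := by field_simp
    have : ‖T β (x + xbar β) - xbar β‖ ≤ Y + Z := by linarith
    simpa [dist_eq_norm] using this.trans hYZ.le
  · intro β hβm x hx y hy
    have := hlip β hβm x hx y hy
    calc ‖(T β (x + xbar β) - xbar β) - (T β (y + xbar β) - xbar β)‖
        = ‖T β (x + xbar β) - T β (y + xbar β)‖ := by congr 1; abel
      _ ≤ (Z / r) * ‖x - y‖ := this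
end

section
/- Let ν ≥ 1, let a = (a_k)_{k≥0} be a sequence of complex numbers with ‖a‖_{1,ν} = |a₀| + 2 Σ_{k≥1} |a_k| ν^k < ∞, and let v = (v_k)_{k≥0} satisfy ‖v‖_{1,ν} ≤ 1. Then for every k ≥ 0, |(a ∗ v)_k| ≤ Q_k(a), where Q_k(a) := max{ |a_k|, sup_{k' ≥ 1} (|a_{|k−k'|}| + |a_{k+k'}|)/(2 ν^{k'}) } and (a ∗ v)_k = Σ_{k₁ + k₂ = k, k₁, k₂ ∈ ℤ} a_{|k₁|} v_{|k₂|}. -/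
/-- The discrete (Chebyshev) convolution `(a ∗ v)_k = Σ_{k₁+k₂=k, k₁,k₂ ∈ ℤ} a_{|k₁|} v_{|k₂|}`. -/
noncomputable def chebConv (a v : ℕ → ℂ) (k : ℕ) : ℂ :=
  ∑' n : ℤ, a n.natAbs * v ((k : ℤ) - n).natAbs

/-- The quantity `Q_k(a) = max{ |a_k|, sup_{k'≥1} (|a_{|k−k'|}| + |a_{k+k'}|)/(2ν^{k'}) }`. -/
noncomputable def Qbound (ν : ℝ) (a : ℕ → ℂ) (k : ℕ) : ℝ :=
  max (norm (a k))
    (⨆ k' : ℕ, (norm (a ((k : ℤ) - ((k' : ℤ) + 1)).natAbs) +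
        norm (a (k + (k' + 1)))) / (2 * ν ^ (k' + 1)))

/-- Uniform bound on the entries of a convolution with a sequence of unit `ℓ¹_ν` norm:
for `‖v‖_{1,ν} ≤ 1` one has `|(a ∗ v)_k| ≤ Q_k(a)` for every `k`. -/
theorem chebConv_entry_bound (ν : ℝ) (hν : 1 ≤ ν) (a v : ℕ → ℂ)
    (ha : Summable fun k : ℕ => norm (a (k + 1)) * ν ^ (k + 1))
    (hv : Summable fun k : ℕ => norm (v (k + 1)) * ν ^ (k + 1))
    (hvnorm : norm (v 0) + 2 * ∑' k : ℕ, norm (v (k + 1)) * ν ^ (k + 1) ≤ 1) :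
    ∀ k : ℕ, norm (chebConv a v k) ≤ Qbound ν a k := by
  intro k
  have hν0 : (0:ℝ) < ν := lt_of_lt_of_le one_pos hν
  have hνp : ∀ n : ℕ, (1:ℝ) ≤ ν ^ n := fun n => one_le_pow₀ hν
  -- bound |a j| uniformly
  have hb0 : (0:ℝ) ≤ max (norm (a 0)) (∑' m : ℕ, norm (a (m+1)) * ν ^ (m+1)) :=
    le_trans (norm_nonneg _) (le_max_left _ _)
  have haB : ∀ j : ℕ, norm (a j) ≤
      max (norm (a 0)) (∑' m : ℕ, norm (a (m+1)) * ν ^ (m+1)) := by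
    intro j
    cases j with
    | zero => exact le_max_left _ _
    | succ m =>
      refine le_trans ?_ (le_max_right _ _)
      calc norm (a (m+1)) ≤ norm (a (m+1)) * ν ^ (m+1) := by
            nlinarith [norm_nonneg (a (m+1)), hνp (m+1)]
        _ ≤ _ := ha.le_tsum m (fun i _ => by positivity)
  -- the sup is bounded above
  have hFbdd : BddAbove (Set.range fun n : ℕ =>
      (norm (a ((k : ℤ) - ((n : ℤ) + 1)).natAbs) +
        norm (a (k + (n + 1)))) / (2 * ν ^ (n + 1))) := by
    refine ⟨max (norm (a 0)) (∑' m : ℕ, norm (a (m+1)) * ν ^ (m+1)), ?_⟩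
    rintro x ⟨n, rfl⟩
    have h1 := haB ((k : ℤ) - ((n : ℤ) + 1)).natAbs
    have h2 := haB (k + (n + 1))
    have h3 := hνp (n+1)
    have h4 : (0:ℝ) < 2 * ν ^ (n+1) := by positivity
    rw [div_le_iff₀ h4]
    nlinarith [norm_nonneg (a ((k : ℤ) - ((n : ℤ) + 1)).natAbs),
      norm_nonneg (a (k + (n + 1)))]
  have hQ0 : 0 ≤ Qbound ν a k := le_trans (norm_nonneg _) (le_max_left _ _)
  -- key estimate from the sup
  have hkey : ∀ n : ℕ, norm (a ((k : ℤ) - ((n : ℤ) + 1)).natAbs) +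
      norm (a (k + (n + 1))) ≤ 2 * ν ^ (n+1) * Qbound ν a k := by
    intro n
    have h1 : (norm (a ((k : ℤ) - ((n : ℤ) + 1)).natAbs) +
        norm (a (k + (n + 1)))) / (2 * ν ^ (n + 1)) ≤ Qbound ν a k :=
      le_trans (le_ciSup hFbdd n) (le_max_right _ _)
    have h4 : (0:ℝ) < 2 * ν ^ (n+1) := by positivity
    rw [div_le_iff₀ h4] at h1
    linarith
  -- the grouped sequence over ℤ
  set g : ℤ → ℂ := fun m => a ((k : ℤ) - m).natAbs * v m.natAbs with hg
  have hconv : chebConv a v k = ∑' m : ℤ, g m := by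
    rw [chebConv, ← (Equiv.subLeft (k:ℤ)).tsum_eq
      (fun n : ℤ => a n.natAbs * v ((k : ℤ) - n).natAbs)]
    refine tsum_congr fun m => ?_
    simp [hg, Equiv.subLeft, sub_sub_cancel]
  -- identify the shifted terms
  have hgP : ∀ n : ℕ, g ((n:ℤ) + 1) = a ((k : ℤ) - ((n : ℤ) + 1)).natAbs * v (n+1) := by
    intro n
    have : ((n:ℤ) + 1).natAbs = n + 1 := by omega
    simp [hg, this]
  have hgN : ∀ n : ℕ, g (-((n:ℤ) + 1)) = a (k + (n+1)) * v (n+1) := by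
    intro n
    have h1 : (-((n:ℤ) + 1)).natAbs = n + 1 := by omega
    have h2 : ((k:ℤ) - (-((n:ℤ) + 1))).natAbs = k + (n+1) := by omega
    show a ((k:ℤ) - (-((n:ℤ) + 1))).natAbs * v (-((n:ℤ) + 1)).natAbs = _
    rw [h1, h2]
  -- norm bounds
  have hnP : ∀ n : ℕ, norm (g ((n:ℤ) + 1)) + norm (g (-((n:ℤ) + 1))) ≤
      2 * Qbound ν a k * (norm (v (n+1)) * ν ^ (n+1)) := by
    intro n
    rw [hgP n, hgN n, norm_mul, norm_mul]
    have := hkey n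
    have hvn := norm_nonneg (v (n+1))
    nlinarith [norm_nonneg (a ((k : ℤ) - ((n : ℤ) + 1)).natAbs),
      norm_nonneg (a (k + (n + 1))), hνp (n+1)]
  have hrhs : Summable fun n : ℕ => 2 * Qbound ν a k * (norm (v (n+1)) * ν ^ (n+1)) :=
    hv.mul_left _
  have habsP : ∀ n : ℕ, norm (g ((n:ℤ) + 1)) ≤
      2 * Qbound ν a k * (norm (v (n+1)) * ν ^ (n+1)) := by
    intro n
    have := hnP n
    have := norm_nonneg (g (-((n:ℤ) + 1)))
    linarith
  have habsN : ∀ n : ℕ, norm (g (-((n:ℤ) + 1))) ≤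
      2 * Qbound ν a k * (norm (v (n+1)) * ν ^ (n+1)) := by
    intro n
    have := hnP n
    have := norm_nonneg (g ((n:ℤ) + 1))
    linarith
  -- summability
  have hnormP : Summable fun n : ℕ => norm (g ((n:ℤ) + 1)) :=
    Summable.of_nonneg_of_le (fun n => norm_nonneg _) habsP hrhs
  have hnormN : Summable fun n : ℕ => norm (g (-((n:ℤ) + 1))) :=
    Summable.of_nonneg_of_le (fun n => norm_nonneg _) habsN hrhs
  have hsumP1 : Summable fun n : ℕ => g ((n:ℤ) + 1) := by
    refine Summable.of_norm ?_
    simpa using hnormP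
  have hsumN : Summable fun n : ℕ => g (-((n:ℤ) + 1)) := by
    refine Summable.of_norm ?_
    simpa using hnormN
  have hsumP : Summable fun n : ℕ => g (n:ℤ) := by
    have : Summable fun n : ℕ => g ((n:ℤ) + 1) := hsumP1
    rw [← summable_nat_add_iff 1]
    convert this using 2 with n
    all_goals rfl
  -- split the tsum
  have hsplit : ∑' m : ℤ, g m = (∑' n : ℕ, g (n:ℤ)) + ∑' n : ℕ, g (-((n:ℤ) + 1)) :=
    tsum_of_nat_of_neg_add_one hsumP hsumN
  have hzero : ∑' n : ℕ, g (n:ℤ) = g 0 + ∑' n : ℕ, g ((n:ℤ) + 1) := by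
    rw [hsumP.tsum_eq_zero_add]
    congr 1
    all_goals exact tsum_congr fun n => by push_cast; ring_nf
  have hg0 : g 0 = a k * v 0 := by simp [hg]
  -- final estimate
  have hTP : norm (∑' n : ℕ, g ((n:ℤ) + 1)) ≤ ∑' n : ℕ, norm (g ((n:ℤ) + 1)) := by
    simpa using
      norm_tsum_le_tsum_norm (f := fun n : ℕ => g ((n:ℤ) + 1))
        (by simpa using hnormP)
  have hTN : norm (∑' n : ℕ, g (-((n:ℤ) + 1))) ≤
      ∑' n : ℕ, norm (g (-((n:ℤ) + 1))) := by
    simpa using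
      norm_tsum_le_tsum_norm (f := fun n : ℕ => g (-((n:ℤ) + 1)))
        (by simpa using hnormN)
  have hpair : (∑' n : ℕ, norm (g ((n:ℤ) + 1))) +
      (∑' n : ℕ, norm (g (-((n:ℤ) + 1)))) ≤
      2 * Qbound ν a k * ∑' n : ℕ, norm (v (n+1)) * ν ^ (n+1) := by
    rw [← hnormP.tsum_add hnormN, ← tsum_mul_left]
    exact Summable.tsum_le_tsum hnP (hnormP.add hnormN) hrhs
  have hQak : norm (a k) ≤ Qbound ν a k := le_max_left _ _
  have hv0 : 0 ≤ norm (v 0) := norm_nonneg _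
  have hT0 : 0 ≤ ∑' n : ℕ, norm (v (n+1)) * ν ^ (n+1) :=
    tsum_nonneg fun n => by positivity
  calc norm (chebConv a v k)
      = norm (a k * v 0 + (∑' n : ℕ, g ((n:ℤ) + 1)) + ∑' n : ℕ, g (-((n:ℤ) + 1))) := by
        rw [hconv, hsplit, hzero, hg0, add_assoc]
    _ ≤ norm (a k * v 0) + norm (∑' n : ℕ, g ((n:ℤ) + 1)) +
        norm (∑' n : ℕ, g (-((n:ℤ) + 1))) := by
        refine le_trans (norm_add_le _ _) ?_
        have := norm_add_le (a k * v 0) (∑' n : ℕ, g ((n:ℤ) + 1))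
        linarith
    _ ≤ Qbound ν a k * norm (v 0) +
        2 * Qbound ν a k * ∑' n : ℕ, norm (v (n+1)) * ν ^ (n+1) := by
        rw [norm_mul]
        nlinarith [hTP, hTN, hpair]
    _ = Qbound ν a k * (norm (v 0) +
        2 * ∑' n : ℕ, norm (v (n+1)) * ν ^ (n+1)) := by ring
    _ ≤ Qbound ν a k * 1 := by
        apply mul_le_mul_of_nonneg_left hvnorm hQ0
    _ = Qbound ν a k := mul_one _
end

section
/- Let β ∈ ℝ and let u : ℝ → ℝ be a C⁴ function satisfying u''''(t) + β u''(t) + e^{u(t)} − 1 = 0 for all t ∈ ℝ. Assume that u(t) u'''(t) → 0, u'(t) u''(t) → 0 and u(t) u'(t) → 0 as t → ±∞, and that the functions t ↦ u''(t)², t ↦ u'(t)² and t ↦ (e^{u(t)} − 1) u(t) are integrable over ℝ. Then ∫_ℝ (u''(t)² − β u'(t)²) dt = − ∫_ℝ (e^{u(t)} − 1) u(t) dt. -/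
open MeasureTheory Filter

/-- Integral identity for solutions of the suspension bridge equation decaying at
infinity: `∫_ℝ (u''² − β u'²) = − ∫_ℝ (eᵘ − 1) u`. -/
theorem suspension_bridge_integral_identity (β : ℝ) (u : ℝ → ℝ)
    (hu : ContDiff ℝ 4 u)
    (hode : ∀ t : ℝ, iteratedDeriv 4 u t + β * iteratedDeriv 2 u t + Real.exp (u t) - 1 = 0)
    (h3top : Tendsto (fun t => u t * iteratedDeriv 3 u t) atTop (nhds 0))
    (h3bot : Tendsto (fun t => u t * iteratedDeriv 3 u t) atBot (nhds 0))
    (h2top : Tendsto (fun t => deriv u t * iteratedDeriv 2 u t) atTop (nhds 0))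
    (h2bot : Tendsto (fun t => deriv u t * iteratedDeriv 2 u t) atBot (nhds 0))
    (h1top : Tendsto (fun t => u t * deriv u t) atTop (nhds 0))
    (h1bot : Tendsto (fun t => u t * deriv u t) atBot (nhds 0))
    (hi2 : Integrable (fun t => (iteratedDeriv 2 u t) ^ 2))
    (hi1 : Integrable (fun t => (deriv u t) ^ 2))
    (hi0 : Integrable (fun t => (Real.exp (u t) - 1) * u t)) :
    (∫ t : ℝ, ((iteratedDeriv 2 u t) ^ 2 - β * (deriv u t) ^ 2)) =
      -∫ t : ℝ, (Real.exp (u t) - 1) * u t := by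
  -- derivative facts
  have hdn : ∀ n : ℕ, n < 4 → ∀ t, HasDerivAt (iteratedDeriv n u) (iteratedDeriv (n+1) u t) t := by
    intro n hn t
    have h1 : Differentiable ℝ (iteratedDeriv n u) :=
      hu.differentiable_iteratedDeriv n (by exact_mod_cast hn)
    have := (h1 t).hasDerivAt
    rwa [iteratedDeriv_succ]
  have hd0 : ∀ t, HasDerivAt u (deriv u t) t := fun t =>
    ((hu.differentiable (by norm_num)) t).hasDerivAt
  have hd1 : ∀ t, HasDerivAt (deriv u) (iteratedDeriv 2 u t) t := by
    intro t
    have := hdn 1 (by norm_num) t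
    simpa [iteratedDeriv_one] using this
  -- define F and g
  set F : ℝ → ℝ := fun t => u t * iteratedDeriv 3 u t - deriv u t * iteratedDeriv 2 u t
    + β * (u t * deriv u t) with hF
  set g : ℝ → ℝ := fun t => -((Real.exp (u t) - 1) * u t)
    - ((iteratedDeriv 2 u t) ^ 2 - β * (deriv u t) ^ 2) with hg
  have hFd : ∀ t, HasDerivAt F (g t) t := by
    intro t
    have h3 := hdn 3 (by norm_num) t
    have h2 := hdn 2 (by norm_num) t
    have hA : HasDerivAt (fun t => u t * iteratedDeriv 3 u t)
        (deriv u t * iteratedDeriv 3 u t + u t * iteratedDeriv 4 u t) t := (hd0 t).mul h3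
    have hB : HasDerivAt (fun t => deriv u t * iteratedDeriv 2 u t)
        (iteratedDeriv 2 u t * iteratedDeriv 2 u t + deriv u t * iteratedDeriv 3 u t) t :=
      (hd1 t).mul h2
    have hC : HasDerivAt (fun t => u t * deriv u t)
        (deriv u t * deriv u t + u t * iteratedDeriv 2 u t) t := (hd0 t).mul (hd1 t)
    have := (hA.sub hB).add (hC.const_mul β)
    convert this using 1
    case e'_4 => rfl
    case e'_5 => rfl
    case e'_8 => rfl
    have hode' := hode t
    have : iteratedDeriv 4 u t = -(β * iteratedDeriv 2 u t) - (Real.exp (u t) - 1) := by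
      linarith
    rw [hg]
    simp only [this]
    ring
  have hgint : Integrable g := by
    have := ((hi0.neg).sub (hi2.sub (hi1.const_mul β)))
    exact this
  have hFtop : Tendsto F atTop (nhds 0) := by
    have := (h3top.sub h2top).add (h1top.const_mul β)
    simpa using this
  have hFbot : Tendsto F atBot (nhds 0) := by
    have := (h3bot.sub h2bot).add (h1bot.const_mul β)
    simpa using this
  have hint0 : (∫ t, g t) = 0 := by
    have := integral_of_hasDerivAt_of_tendsto hFd hgint hFbot hFtop
    simpa using this
  have hsplit : (∫ t, g t) = (-∫ t, (Real.exp (u t) - 1) * u t)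
      - ∫ t, ((iteratedDeriv 2 u t) ^ 2 - β * (deriv u t) ^ 2) := by
    simp only [hg]
    rw [integral_sub, integral_neg]
    · exact hi0.neg
    · exact hi2.sub (hi1.const_mul β)
  rw [hsplit] at hint0
  linarith
end

section
/- Let β ≤ 0 and let u : ℝ → ℝ be a C⁴ function satisfying u''''(t) + β u''(t) + e^{u(t)} − 1 = 0 for all t ∈ ℝ. Assume that u(t) u'''(t) → 0, u'(t) u''(t) → 0 and u(t) u'(t) → 0 as t → ±∞, and that the functions t ↦ u''(t)², t ↦ u'(t)² and t ↦ (e^{u(t)} − 1) u(t) are integrable over ℝ. Then u(t) = 0 for all t ∈ ℝ; in particular, there are no nontrivial homoclinic orbits for β ≤ 0. -/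
open MeasureTheory Filter

/-- `(e^x - 1) * x ≥ 0` for all real `x`. -/
lemma exp_sub_one_mul_nonneg (x : ℝ) : 0 ≤ (Real.exp x - 1) * x := by
  rcases le_or_gt 0 x with h | h
  · exact mul_nonneg (sub_nonneg.2 (Real.one_le_exp_iff.2 h)) h
  · nlinarith [Real.exp_lt_one_iff.2 h]

/-- No nontrivial homoclinic orbits of the suspension bridge equation for `β ≤ 0`:
any solution decaying at infinity (in the sense of the stated limits and
integrability conditions) must be identically zero. -/
theorem suspension_bridge_no_homoclinic_nonpositive_beta (β : ℝ) (hβ : β ≤ 0)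
    (u : ℝ → ℝ) (hu : ContDiff ℝ 4 u)
    (hode : ∀ t : ℝ, iteratedDeriv 4 u t + β * iteratedDeriv 2 u t + Real.exp (u t) - 1 = 0)
    (h3top : Tendsto (fun t => u t * iteratedDeriv 3 u t) atTop (nhds 0))
    (h3bot : Tendsto (fun t => u t * iteratedDeriv 3 u t) atBot (nhds 0))
    (h2top : Tendsto (fun t => deriv u t * iteratedDeriv 2 u t) atTop (nhds 0))
    (h2bot : Tendsto (fun t => deriv u t * iteratedDeriv 2 u t) atBot (nhds 0))
    (h1top : Tendsto (fun t => u t * deriv u t) atTop (nhds 0))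
    (h1bot : Tendsto (fun t => u t * deriv u t) atBot (nhds 0))
    (hi2 : Integrable (fun t => (iteratedDeriv 2 u t) ^ 2))
    (hi1 : Integrable (fun t => (deriv u t) ^ 2))
    (hi0 : Integrable (fun t => (Real.exp (u t) - 1) * u t)) :
    ∀ t : ℝ, u t = 0 := by
  have hd : ∀ m : ℕ, m < 4 → Differentiable ℝ (iteratedDeriv m u) := fun m hm =>
    hu.differentiable_iteratedDeriv m (by exact_mod_cast hm)
  have hD : ∀ (m : ℕ), m < 4 → ∀ t, HasDerivAt (iteratedDeriv m u) (iteratedDeriv (m+1) u t) t := by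
    intro m hm t
    rw [iteratedDeriv_succ]
    exact (hd m hm t).hasDerivAt
  have hu1 : deriv u = iteratedDeriv 1 u := iteratedDeriv_one.symm
  set G : ℝ → ℝ := fun t => u t * iteratedDeriv 3 u t - deriv u t * iteratedDeriv 2 u t
    + β * (u t * deriv u t) with hG
  set g : ℝ → ℝ := fun t => -((Real.exp (u t) - 1) * u t) - (iteratedDeriv 2 u t) ^ 2
    + β * (deriv u t) ^ 2 with hg
  have hGd : ∀ t, HasDerivAt G (g t) t := by
    intro t
    have h0 : HasDerivAt u (iteratedDeriv 1 u t) t := by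
      simpa [iteratedDeriv_zero] using hD 0 (by norm_num) t
    have h1 : HasDerivAt (deriv u) (iteratedDeriv 2 u t) t := by
      rw [hu1]; exact hD 1 (by norm_num) t
    have h2 : HasDerivAt (iteratedDeriv 2 u) (iteratedDeriv 3 u t) t := hD 2 (by norm_num) t
    have h3 : HasDerivAt (iteratedDeriv 3 u) (iteratedDeriv 4 u t) t := hD 3 (by norm_num) t
    have := (((h0.mul h3).sub (h1.mul h2)).add (((h0.mul h1)).const_mul β))
    refine this.congr_deriv ?_
    have h1' : deriv u t = iteratedDeriv 1 u t := by rw [hu1]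
    have h4 : iteratedDeriv 4 u t = 1 - Real.exp (u t) - β * iteratedDeriv 2 u t := by
      have := hode t; linarith
    simp only [hg]
    rw [h4, ← h1']
    ring
  have hgi : Integrable g := by
    exact (hi0.neg.sub hi2).add (hi1.const_mul β)
  have hGtop : Tendsto G atTop (nhds 0) := by
    have := ((h3top.sub h2top).add (h1top.const_mul β))
    simpa using this
  have hGbot : Tendsto G atBot (nhds 0) := by
    have := ((h3bot.sub h2bot).add (h1bot.const_mul β))
    simpa using this
  have hint : ∫ t, g t = 0 := by
    rw [MeasureTheory.integral_of_hasDerivAt_of_tendsto hGd hgi hGbot hGtop]; ring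
  have e0 : (0:ℝ) ≤ ∫ t, (Real.exp (u t) - 1) * u t :=
    integral_nonneg fun t => exp_sub_one_mul_nonneg (u t)
  have e2 : (0:ℝ) ≤ ∫ t, (iteratedDeriv 2 u t) ^ 2 := by positivity
  have e1 : (0:ℝ) ≤ ∫ t, (deriv u t) ^ 2 := by positivity
  have hsplit : ∫ t, g t =
      -(∫ t, (Real.exp (u t) - 1) * u t) - (∫ t, (iteratedDeriv 2 u t) ^ 2)
      + β * ∫ t, (deriv u t) ^ 2 := by
    have ha : Integrable (fun t => -((Real.exp (u t) - 1) * u t) - (iteratedDeriv 2 u t) ^ 2) :=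
      hi0.neg.sub hi2
    have hb : Integrable (fun t => β * (deriv u t) ^ 2) := hi1.const_mul β
    simp only [hg]
    rw [integral_add ha hb, integral_sub (show Integrable (fun t => -((Real.exp (u t) - 1) * u t)) volume from hi0.neg) hi2, integral_neg, integral_const_mul]
  have hzero : ∫ t, (Real.exp (u t) - 1) * u t = 0 := by
    have hb : β * ∫ t, (deriv u t) ^ 2 ≤ 0 := mul_nonpos_of_nonpos_of_nonneg hβ e1
    linarith [hint, hsplit.symm.trans hint]
  have hae : (fun t => (Real.exp (u t) - 1) * u t) =ᵐ[volume] 0 :=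
    (integral_eq_zero_iff_of_nonneg (fun t => exp_sub_one_mul_nonneg (u t)) hi0).1 hzero
  have hcont : Continuous fun t => (Real.exp (u t) - 1) * u t :=
    ((Real.continuous_exp.comp hu.continuous).sub continuous_const).mul hu.continuous
  have heq : (fun t => (Real.exp (u t) - 1) * u t) = 0 :=
    (hcont.ae_eq_iff_eq volume continuous_const).1 hae
  intro t
  have ht : (Real.exp (u t) - 1) * u t = 0 := congrFun heq t
  by_contra h
  rcases lt_or_gt_of_ne h with hlt | hgt
  · nlinarith [Real.exp_lt_one_iff.2 hlt]
  · nlinarith [Real.one_lt_exp_iff.2 hgt]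
end
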